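/- Let a : (0, ε₀) → (0, ∞) be increasing, g : (0,∞) → (0,∞) increasing, and suppose for all 0 < s, t < ε₀ with s + t < ε₀ that t·a(s) ≤ a(s+t)/g(1/a(s+t)). Fix 0 < D < ε₀ and define s₀ = sup{0 < s < D : a(D) > e·a(s)} and inductively s_{j+1} = sup{0 < s < s_j : a(s_j) > e·a(s)}. Then D ≤ 3e/g(1/a(D)) + (2e²/(e−1))·∫_{1/a(D)}^∞ dx/(x·g(x)), provided x·g(x) is increasing and the integral is finite. -/

import Mathlib

open MeasureTheory Real

/-- Core analytic content of Theorem 5.4: if `a : (0,ε₀) → (0,∞)` is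
increasing, `g` is positive increasing with `x·g(x)` increasing and
`∫ dx/(x g x)` finite, and `t·a(s) ≤ a(s+t)/g(1/a(s+t))` for all
`0 < s, t < ε₀` with `s + t < ε₀`, then for every `0 < D < ε₀`,
`D ≤ 3e/g(1/a(D)) + (2e²/(e−1))·∫_{1/a(D)}^∞ dx/(x·g(x))`. -/
theorem stmt_19 (ε₀ : ℝ) (hε₀ : 0 < ε₀) (a g : ℝ → ℝ)
    (hapos : ∀ s : ℝ, 0 < s → s < ε₀ → 0 < a s)
    (hamono : MonotoneOn a (Set.Ioo 0 ε₀))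
    (hgpos : ∀ x : ℝ, 0 < x → 0 < g x)
    (hgmono : MonotoneOn g (Set.Ioi (0 : ℝ)))
    (hxg : MonotoneOn (fun x => x * g x) (Set.Ioi (0 : ℝ)))
    (hfun : ∀ s t : ℝ, 0 < s → s < ε₀ → 0 < t → t < ε₀ → s + t < ε₀ →
      t * a s ≤ a (s + t) / g (1 / a (s + t)))
    (D : ℝ) (hD0 : 0 < D) (hDε : D < ε₀)
    (hint : IntegrableOn (fun x : ℝ => 1 / (x * g x)) (Set.Ioi (1 / a D))) :
    D ≤ 3 * exp 1 / g (1 / a D)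
      + (2 * exp 1 ^ 2 / (exp 1 - 1)) * ∫ x in Set.Ioi (1 / a D), 1 / (x * g x) := by
  set f : ℝ → ℝ := fun x => 1 / (x * g x) with hfdef
  set e : ℝ := exp 1 with he
  have he1 : (1:ℝ) < e := by
    rw [he]; have := Real.exp_one_gt_d9; linarith
  have he0 : (0:ℝ) < e := lt_trans one_pos he1
  have haD : 0 < a D := hapos D hD0 hDε
  set X : ℕ → ℝ := fun j => e ^ j / a D with hXdef
  have hX0 : X 0 = 1 / a D := by simp [hXdef]
  have hXpos : ∀ j, 0 < X j := fun j => div_pos (pow_pos he0 j) haD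
  have hXmono : Monotone X := by
    apply monotone_nat_of_le_succ
    intro n
    simp only [hXdef]
    gcongr
    · exact he1.le
    · exact Nat.le_succ n
  have hgX : ∀ j, 0 < g (X j) := fun j => hgpos _ (hXpos j)
  -- the sublevel sets and their suprema
  set S : ℕ → Set ℝ := fun j => {s | s ∈ Set.Ioo 0 D ∧ a s * e ^ j ≤ a D} with hSdef
  set t : ℕ → ℝ := fun j => sSup (S j) with htdef
  have hbdd : ∀ j, BddAbove (S j) := fun j => ⟨D, fun x hx => hx.1.2.le⟩
  have htnn : ∀ j, 0 ≤ t j := fun j => Real.sSup_nonneg (fun x hx => hx.1.1.le)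
  have ht0 : t 0 = D := by
    have hS0 : S 0 = Set.Ioo 0 D := by
      ext s
      constructor
      · exact fun h => h.1
      · intro hs
        refine ⟨hs, ?_⟩
        rw [pow_zero, mul_one]
        exact hamono ⟨hs.1, lt_trans hs.2 hDε⟩ ⟨hD0, hDε⟩ hs.2.le
    rw [htdef]
    simp only [hS0]
    exact csSup_Ioo hD0
  -- the gap estimate
  have gap : ∀ j, t j ≤ t (j+1) + e / g (X j) := by
    intro j
    have hc : 0 < e / g (X j) := div_pos he0 (hgX j)
    apply Real.sSup_le _ (by linarith [htnn (j+1)])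
    intro s' hs'
    by_contra hcon
    push_neg at hcon
    obtain ⟨⟨hs'0, hs'D⟩, hs'a⟩ := hs'
    set c := e / g (X j) with hcdef
    have h1 : t (j+1) < s' - c := by linarith
    set s := (t (j+1) + (s' - c)) / 2 with hsdef
    have hts : t (j+1) < s := by rw [hsdef]; linarith
    have hs0 : 0 < s := lt_of_le_of_lt (htnn (j+1)) hts
    have hslt : s < s' - c := by rw [hsdef]; linarith
    have hss' : s < s' := by linarith
    have hsD : s < D := lt_trans hss' hs'D
    have hsnot : s ∉ S (j+1) := fun hmem => absurd (le_csSup (hbdd (j+1)) hmem) (not_le.mpr hts)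
    have has : a D < a s * e ^ (j+1) := by
      by_contra h2
      push_neg at h2
      exact hsnot ⟨⟨hs0, hsD⟩, h2⟩
    have hstep := hfun s (s' - s) hs0 (lt_trans hsD hDε) (by linarith)
      (by linarith) (by rw [show s + (s' - s) = s' from by ring]; linarith)
    rw [show s + (s' - s) = s' from by ring] at hstep
    have has'pos : 0 < a s' := hapos s' hs'0 (lt_trans hs'D hDε)
    have haspos : 0 < a s := hapos s hs0 (lt_trans hsD hDε)
    have hEj : (0:ℝ) < e ^ j := pow_pos he0 j
    have hub : a s' ≤ a D / e ^ j := by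
      rw [le_div_iff₀ hEj]; exact hs'a
    have hXle1 : X j ≤ 1 / a s' := by
      simp only [hXdef]
      rw [div_le_div_iff₀ haD has'pos]
      nlinarith
    have hg2 : g (X j) ≤ g (1 / a s') :=
      hgmono (Set.mem_Ioi.mpr (hXpos j)) (Set.mem_Ioi.mpr (one_div_pos.mpr has'pos)) hXle1
    have hrhs : a s' / g (1 / a s') ≤ (a D / e ^ j) / g (X j) :=
      div_le_div₀ (div_pos haD hEj).le hub (hgX j) hg2
    have h3 : (s' - s) * a s ≤ (a D / e ^ j) / g (X j) := le_trans hstep hrhs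
    rw [div_div, le_div_iff₀ (mul_pos hEj (hgX j))] at h3
    -- h3 : (s' - s) * a s * (e ^ j * g (X j)) ≤ a D
    have h5 : e < (s' - s) * g (X j) := by
      have : c < s' - s := by linarith
      rw [hcdef, div_lt_iff₀ (hgX j)] at this
      exact this
    nlinarith [mul_lt_mul_of_pos_left h5 (mul_pos haspos hEj), pow_succ e j]
  -- the suprema go to 0
  have hsmall : ∀ δ : ℝ, 0 < δ → δ < D → ∃ N, t N ≤ δ := by
    intro δ hδ hδD
    have haδ : 0 < a δ := hapos δ hδ (lt_trans hδD hDε)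
    obtain ⟨N, hN⟩ := pow_unbounded_of_one_lt (a D / a δ) he1
    refine ⟨N, Real.sSup_le ?_ hδ.le⟩
    rintro s ⟨⟨hs0, hsD⟩, hsa⟩
    by_contra hcon
    push_neg at hcon
    have hmono := hamono ⟨hδ, lt_trans hδD hDε⟩ ⟨hs0, lt_trans hsD hDε⟩ hcon.le
    have hEN : (0:ℝ) < e ^ N := pow_pos he0 N
    rw [div_lt_iff₀ haδ] at hN
    nlinarith [mul_le_mul_of_nonneg_left hmono hEN.le]
  -- integrability pieces
  have hintIoi : IntegrableOn f (Set.Ioi (X 0)) := by rw [hX0]; exact hint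
  have hintIoc : ∀ i j : ℕ, IntegrableOn f (Set.Ioc (X i) (X j)) := by
    intro i j
    apply hintIoi.mono_set
    intro x hx
    exact lt_of_le_of_lt (hXmono (Nat.zero_le i)) hx.1
  have hII : ∀ i j : ℕ, i ≤ j → IntervalIntegrable f volume (X i) (X j) := by
    intro i j hij
    rw [intervalIntegrable_iff_integrableOn_Ioc_of_le (hXmono hij)]
    exact hintIoc i j
  -- per-step integral lower bound
  have key : ∀ i : ℕ, e / g (X (i+1)) ≤ (e^2/(e-1)) * ∫ x in Set.Ioc (X i) (X (i+1)), f x := by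
    intro i
    have hGp : 0 < g (X (i+1)) := hgX (i+1)
    have hXp : 0 < X (i+1) := hXpos (i+1)
    have h1 : ∀ x ∈ Set.Ioc (X i) (X (i+1)), 1 / (X (i+1) * g (X (i+1))) ≤ f x := by
      intro x hx
      have hx0 : 0 < x := lt_trans (hXpos i) hx.1
      have hmul : x * g x ≤ X (i+1) * g (X (i+1)) :=
        hxg (Set.mem_Ioi.mpr hx0) (Set.mem_Ioi.mpr hXp) hx.2
      have hxgpos : 0 < x * g x := mul_pos hx0 (hgpos x hx0)
      exact one_div_le_one_div_of_le hxgpos hmul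
    have h2 : ∫ _x in Set.Ioc (X i) (X (i+1)), (1 / (X (i+1) * g (X (i+1)))) ≤
        ∫ x in Set.Ioc (X i) (X (i+1)), f x := by
      apply setIntegral_mono_on _ (hintIoc i (i+1)) measurableSet_Ioc h1
      exact integrableOn_const (by rw [Real.volume_Ioc]; exact ENNReal.ofReal_ne_top)
    rw [setIntegral_const, Real.volume_real_Ioc_of_le (hXmono (Nat.le_succ i)), smul_eq_mul] at h2
    have hcoef : (0:ℝ) < e^2/(e-1) := by
      apply div_pos (by positivity); linarith
    have heq : (e^2/(e-1)) * ((X (i+1) - X i) * (1 / (X (i+1) * g (X (i+1))))) =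
        e / g (X (i+1)) := by
      have hE : (0:ℝ) < e ^ i := pow_pos he0 i
      have hgne : g (X (i+1)) ≠ 0 := ne_of_gt hGp
      have hXgap : X (i+1) - X i = e ^ i * (e - 1) / a D := by
        simp only [hXdef, pow_succ]
        field_simp
      have hX1 : X (i+1) * g (X (i+1)) = (e ^ i * e / a D) * g (X (i+1)) := by
        simp only [hXdef, pow_succ]
      rw [hXgap, hX1]
      have hene : e - 1 ≠ 0 := by linarith
      field_simp
    calc e / g (X (i+1)) = (e^2/(e-1)) * ((X (i+1) - X i) * (1 / (X (i+1) * g (X (i+1))))) :=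
          heq.symm
      _ ≤ (e^2/(e-1)) * ∫ x in Set.Ioc (X i) (X (i+1)), f x :=
          mul_le_mul_of_nonneg_left h2 hcoef.le
  -- telescoping integrals
  set H : ℕ → ℝ := fun m => ∫ x in (X 0)..(X m), f x with hHdef
  have hHstep : ∀ i : ℕ, ∫ x in Set.Ioc (X i) (X (i+1)), f x = H (i+1) - H i := by
    intro i
    have hadd := intervalIntegral.integral_add_adjacent_intervals
      (hII 0 i (Nat.zero_le i)) (hII i (i+1) (Nat.le_succ i))
    rw [← intervalIntegral.integral_of_le (hXmono (Nat.le_succ i))]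
    simp only [hHdef]
    linarith [hadd]
  have hfnn : ∀ x ∈ Set.Ioi (X 0), 0 ≤ f x := by
    intro x hx
    have hx0 : 0 < x := lt_trans (hXpos 0) hx
    exact le_of_lt (div_pos one_pos (mul_pos hx0 (hgpos x hx0)))
  have hHle : ∀ m : ℕ, H m ≤ ∫ x in Set.Ioi (X 0), f x := by
    intro m
    have h1 : H m = ∫ x in Set.Ioc (X 0) (X m), f x :=
      intervalIntegral.integral_of_le (hXmono (Nat.zero_le m))
    rw [h1]
    apply setIntegral_mono_set hintIoi
    · filter_upwards [ae_restrict_mem measurableSet_Ioi] with x hx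
      exact hfnn x hx
    · exact (Set.Ioc_subset_Ioi_self).eventuallyLE
  set I : ℝ := ∫ x in Set.Ioi (X 0), f x with hIdef
  have hInn : 0 ≤ I := setIntegral_nonneg measurableSet_Ioi hfnn
  -- telescoping gaps
  have hsum : ∀ N : ℕ, t 0 - t N ≤ ∑ j ∈ Finset.range N, e / g (X j) := by
    intro N
    induction N with
    | zero => simp
    | succ n ih =>
      rw [Finset.sum_range_succ]
      have := gap n
      linarith
  have hcoef : (0:ℝ) < e^2/(e-1) := by
    apply div_pos (by positivity); linarith
  have hsum2 : ∀ N : ℕ, (∑ j ∈ Finset.range N, e / g (X j)) ≤ e / g (X 0) + (e^2/(e-1)) * I := by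
    intro N
    match N with
    | 0 =>
      simp only [Finset.range_zero, Finset.sum_empty]
      have := mul_nonneg hcoef.le hInn
      have := div_pos he0 (hgX 0)
      linarith
    | Nat.succ m =>
      rw [Finset.sum_range_succ']
      have h1 : ∑ k ∈ Finset.range m, e / g (X (k+1)) ≤ (e^2/(e-1)) * I := by
        calc ∑ k ∈ Finset.range m, e / g (X (k+1))
            ≤ ∑ k ∈ Finset.range m, (e^2/(e-1)) * ∫ x in Set.Ioc (X k) (X (k+1)), f x :=
              Finset.sum_le_sum (fun k _ => key k)
          _ = (e^2/(e-1)) * ∑ k ∈ Finset.range m, (H (k+1) - H k) := by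
              rw [Finset.mul_sum]
              exact Finset.sum_congr rfl (fun k _ => by rw [hHstep k])
          _ = (e^2/(e-1)) * (H m - H 0) := by rw [Finset.sum_range_sub]
          _ = (e^2/(e-1)) * H m := by
              have : H 0 = 0 := intervalIntegral.integral_same
              rw [this]; ring
          _ ≤ (e^2/(e-1)) * I := mul_le_mul_of_nonneg_left (hHle m) hcoef.le
      linarith
  -- conclusion
  have hIgoal : (∫ x in Set.Ioi (1 / a D), f x) = I := by rw [hIdef, hX0]
  rw [hIgoal]
  have hgD : 0 < g (1 / a D) := hgpos _ (by positivity)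
  have hgX0 : g (X 0) = g (1 / a D) := by rw [hX0]
  apply le_of_forall_pos_le_add
  intro δ hδ
  rcases lt_or_ge δ D with hcase | hcase
  · obtain ⟨N, hN⟩ := hsmall δ hδ hcase
    have h1 := hsum N
    have h2 := hsum2 N
    rw [ht0] at h1
    rw [hgX0] at h2
    have hA : 0 < e / g (1 / a D) := div_pos he0 hgD
    have hEq : (2 * e ^ 2 / (e - 1)) * I = (e ^ 2 / (e - 1)) * I + (e ^ 2 / (e - 1)) * I := by
      ring
    have hEq2 : 3 * e / g (1 / a D) = e / g (1 / a D) + 2 * (e / g (1 / a D)) := by ring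
    have hB : 0 ≤ (e ^ 2 / (e - 1)) * I := mul_nonneg hcoef.le hInn
    linarith
  · have hA : 0 < 3 * e / g (1 / a D) := div_pos (by positivity) hgD
    have hB : 0 ≤ (2 * e ^ 2 / (e - 1)) * I := by
      apply mul_nonneg _ hInn
      apply div_nonneg (by positivity)
      linarith
    linarith
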